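/- Let a, R > 0 and β ∈ ℝ, and write c = cosh β, s = sinh β. Set 𝒥₁ = −πaR²cs, 𝒥₂ = −2πa²R(c² + s²), 𝒟 = 4√3·a·c·s, and A = 16π²a²R(c⁴ + s⁴). Then 𝒥₂² − (π/(12√3))𝒥₁𝒟³ ≥ 0 and A = 8π·√(𝒥₂² − (π/(12√3))𝒥₁𝒟³). -/

import Mathlib

open Real

/-- The extreme magnetically charged boosted Kerr black string saturates the inequality of
Theorem 2.2(b): `A = 8π√(𝒥₂² − (π/(12√3))𝒥₁𝒟³)`. -/
theorem stmt11 (a R β c s J1 J2 D A : ℝ) (ha : 0 < a) (hR : 0 < R)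
    (hc : c = Real.cosh β) (hs : s = Real.sinh β)
    (hJ1 : J1 = -(π * a * R ^ 2 * c * s))
    (hJ2 : J2 = -(2 * π * a ^ 2 * R * (c ^ 2 + s ^ 2)))
    (hD : D = 4 * Real.sqrt 3 * a * c * s)
    (hA : A = 16 * π ^ 2 * a ^ 2 * R * (c ^ 4 + s ^ 4)) :
    0 ≤ J2 ^ 2 - π / (12 * Real.sqrt 3) * J1 * D ^ 3 ∧
      A = 8 * π * Real.sqrt (J2 ^ 2 - π / (12 * Real.sqrt 3) * J1 * D ^ 3) := by
  have hcs : c ^ 2 - s ^ 2 = 1 := by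
    rw [hc, hs]; exact Real.cosh_sq_sub_sinh_sq β
  have h3 : Real.sqrt 3 ^ 2 = 3 := Real.sq_sqrt (by norm_num)
  have h3pos : (0:ℝ) < Real.sqrt 3 := Real.sqrt_pos.mpr (by norm_num)
  have key : J2 ^ 2 - π / (12 * Real.sqrt 3) * J1 * D ^ 3
      = (2 * π * a ^ 2 * R * (c ^ 4 + s ^ 4)) ^ 2 := by
    subst hJ1 hJ2 hD
    field_simp
    linear_combination (64*c^4*s^4) * h3 -
      (48*(c^2+s^2)^2*(c^2-s^2+1)) * hcs
  have hsq : 0 ≤ c ^ 4 + s ^ 4 := by positivity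
  have hbase : 0 ≤ 2 * π * a ^ 2 * R * (c ^ 4 + s ^ 4) := by positivity
  refine ⟨by rw [key]; positivity, ?_⟩
  rw [key, Real.sqrt_sq hbase, hA]; ring
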